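/- Let H ⊆ F be a seminormal C-monoid such that there exist α ∈ ℕ and a subgroup V ⊆ F^× with H^× ⊆ V, (F^× : V) dividing α, V·(H\H^×) ⊆ H, and q^{2α}F ∩ H = q^α(q^α F ∩ H) for all q ∈ F \ F^×. Then for every a ∈ F \ F^× and every n that is a multiple of α with [a^n] idempotent in C*(H,F), the element a^{n+1} is H-equivalent to a; in particular every class [a] lies in a cyclic subgroup of C*(H,F). -/

import Mathlib

/-- The factorial monoid `F = F^× × ℱ(P)`, with unit group `Fu` and free
abelian monoid `ℱ(P)` modeled by `Multiplicative (P →₀ ℕ)`. -/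
abbrev FM (Fu P : Type*) [CommGroup Fu] : Type _ := Fu × Multiplicative (P →₀ ℕ)

/-- `H`-equivalence on `F`: `y ~ y'` iff for all `x ∈ F`, `x*y ∈ H ↔ x*y' ∈ H`. -/
def HRel {M : Type*} [CommMonoid M] (H : Submonoid M) (y y' : M) : Prop :=
  ∀ x : M, x * y ∈ H ↔ x * y' ∈ H

/-- `y ∈ (F \ F^×) ∪ {1}`: the representatives of the reduced class semigroup. -/
def NU1 {M : Type*} [Monoid M] (y : M) : Prop := ¬ IsUnit y ∨ y = 1

/-- The reduced class semigroup `C*(H,F)` is finite: there are finitely many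
`H`-equivalence classes of elements of `(F \ F^×) ∪ {1}`. -/
def CStarFinite {M : Type*} [CommMonoid M] (H : Submonoid M) : Prop :=
  ∃ (n : ℕ) (f : Fin n → M), ∀ y : M, NU1 y → ∃ i : Fin n, HRel H y (f i)

/-- `C*(H,F)` is a union of groups: each class `[y]` lies in some subgroup,
i.e. in the constituent group of some idempotent `[e]`: `[e] + [e] = [e]`,
`[y] + [e] = [y]` and `[y] + [z] = [e]` for some class `[z]`. -/
def CStarUnionOfGroups {M : Type*} [CommMonoid M] (H : Submonoid M) : Prop :=
  ∀ y : M, NU1 y → ∃ e : M, NU1 e ∧ HRel H (e * e) e ∧ HRel H (y * e) y ∧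
    ∃ z : M, NU1 z ∧ HRel H (y * z) e

/-- `H^× = H ∩ F^×`: every element of `H` which is invertible in `F` has its
inverse in `H`. -/
def UnitsCond {M : Type*} [Monoid M] (H : Submonoid M) : Prop :=
  ∀ u : Mˣ, (u : M) ∈ H → ((u⁻¹ : Mˣ) : M) ∈ H

/-- `H` is seminormal: for `x = a/b ∈ q(H)` (`a, b ∈ H`) with `x^n ∈ H` for all
sufficiently large `n` (i.e. `a^n = h_n * b^n` with `h_n ∈ H`), one has `x ∈ H`
(i.e. `a = h * b` with `h ∈ H`). -/
def SeminormalSub {M : Type*} [CommMonoid M] (H : Submonoid M) : Prop :=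
  ∀ a b : M, a ∈ H → b ∈ H → (∃ m : ℕ, ∀ n ≥ m, ∃ h ∈ H, a ^ n = h * b ^ n) →
    ∃ h ∈ H, a = h * b

/-- If all sufficiently large powers of `w` lie in `H` and `H` is seminormal,
then `w ∈ H` (uses cancellation). -/
private lemma seminormal_of_powers {M : Type*} [CancelCommMonoid M] (H : Submonoid M)
    (hsn : SeminormalSub H) (w : M) (β : ℕ) (hw : ∀ n, β + 1 ≤ n → w ^ n ∈ H) :
    w ∈ H := by
  have hpow : ∀ n : ℕ, (w ^ (β + 1 + 1)) ^ n = w ^ n * (w ^ (β + 1)) ^ n := by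
    intro n
    rw [← pow_mul, ← pow_mul, ← pow_add]
    congr 1
    ring
  obtain ⟨h, hh, heq⟩ := hsn (w ^ (β + 1 + 1)) (w ^ (β + 1))
    (hw _ (by omega)) (hw _ le_rfl)
    ⟨β + 1, fun n hn => ⟨w ^ n, hw n hn, hpow n⟩⟩
  have h2 : w ^ (β + 1) * h = w ^ (β + 1) * w := by
    rw [mul_comm, ← heq, pow_succ]
  exact (mul_left_cancel h2) ▸ hh

/-- Key lemma, forward direction: if `X a^{α+1} ∈ H` then `X a ∈ H`. -/
private lemma lem_fwd {M : Type*} [CancelCommMonoid M] (H : Submonoid M)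
    (hsn : SeminormalSub H) (a : M) (β : ℕ)
    (hdn : ∀ y : M, a ^ (β + 1) * (a ^ (β + 1) * y) ∈ H → a ^ (β + 1) * y ∈ H)
    (X : M) (hX : X * a * a ^ (β + 1) ∈ H) : X * a ∈ H := by
  -- Claim A : (X*a)^(m+1) * a^(β+1) ∈ H for all m
  have claimA : ∀ m : ℕ, (X * a) ^ (m + 1) * a ^ (β + 1) ∈ H := by
    intro m
    induction m with
    | zero => simpa using hX
    | succ m ih =>
      have hmul := H.mul_mem ih hX
      have h1 : a ^ (β + 1) * (a ^ (β + 1) * ((X * a) ^ (m + 1) * (X * a))) ∈ H := by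
        have e : a ^ (β + 1) * (a ^ (β + 1) * ((X * a) ^ (m + 1) * (X * a)))
            = (X * a) ^ (m + 1) * a ^ (β + 1) * (X * a * a ^ (β + 1)) := by
          simp [mul_comm, mul_assoc, mul_left_comm]
        rw [e]; exact hmul
      have h2 := hdn _ h1
      have e2 : (X * a) ^ (m + 1 + 1) * a ^ (β + 1)
          = a ^ (β + 1) * ((X * a) ^ (m + 1) * (X * a)) := by
        rw [pow_succ]
        simp [mul_comm, mul_assoc, mul_left_comm]
      rw [e2]; exact h2
  -- Claim B : (X*a)^n ∈ H for all n ≥ β+1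
  have claimB : ∀ n : ℕ, β + 1 ≤ n → (X * a) ^ n ∈ H := by
    intro n hn
    obtain ⟨j, rfl⟩ := Nat.exists_eq_add_of_le hn
    have hA := claimA (β + j)
    have h1 : a ^ (β + 1) * (a ^ (β + 1) * (X ^ (β + 1 + j) * a ^ j)) ∈ H := by
      have e : a ^ (β + 1) * (a ^ (β + 1) * (X ^ (β + 1 + j) * a ^ j))
          = (X * a) ^ (β + j + 1) * a ^ (β + 1) := by
        simp [mul_pow, pow_add, pow_succ, mul_comm, mul_assoc, mul_left_comm]
      rw [e]; exact hA
    have h2 := hdn _ h1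
    have e2 : (X * a) ^ (β + 1 + j) = a ^ (β + 1) * (X ^ (β + 1 + j) * a ^ j) := by
      simp [mul_pow, pow_add, pow_succ, mul_comm, mul_assoc, mul_left_comm]
    rw [e2]; exact h2
  exact seminormal_of_powers H hsn (X * a) β claimB

/-- Key lemma, backward direction: if `X a ∈ H` then `X a^{α+1} ∈ H`. -/
private lemma lem_bwd {M : Type*} [CancelCommMonoid M] (H : Submonoid M)
    (hsn : SeminormalSub H) (a : M) (β : ℕ)
    (hup : ∀ y : M, a ^ (β + 1) * y ∈ H → a ^ (β + 1) * (a ^ (β + 1) * y) ∈ H)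
    (X : M) (hX : X * a ∈ H) : X * a * a ^ (β + 1) ∈ H := by
  -- Claim C : (X*a)^(β+1) * (a^(β+1))^(k+1) ∈ H for all k
  have claimC : ∀ k : ℕ, (X * a) ^ (β + 1) * (a ^ (β + 1)) ^ (k + 1) ∈ H := by
    intro k
    induction k with
    | zero =>
      have h0 : a ^ (β + 1) * X ^ (β + 1) ∈ H := by
        have e : a ^ (β + 1) * X ^ (β + 1) = (X * a) ^ (β + 1) := by
          simp [mul_pow, mul_comm]
        rw [e]; exact H.pow_mem hX (β + 1)
      have h1 := hup _ h0
      have e2 : (X * a) ^ (β + 1) * (a ^ (β + 1)) ^ (0 + 1)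
          = a ^ (β + 1) * (a ^ (β + 1) * X ^ (β + 1)) := by
        simp [mul_pow, mul_comm, mul_assoc, mul_left_comm]
      rw [e2]; exact h1
    | succ k ih =>
      have h1 : a ^ (β + 1) * (X ^ (β + 1) * (a ^ (β + 1)) ^ (k + 1)) ∈ H := by
        have e : a ^ (β + 1) * (X ^ (β + 1) * (a ^ (β + 1)) ^ (k + 1))
            = (X * a) ^ (β + 1) * (a ^ (β + 1)) ^ (k + 1) := by
          simp [mul_pow, pow_add, pow_succ, mul_comm, mul_assoc, mul_left_comm]
        rw [e]; exact ih
      have h2 := hup _ h1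
      have e2 : (X * a) ^ (β + 1) * (a ^ (β + 1)) ^ (k + 1 + 1)
          = a ^ (β + 1) * (a ^ (β + 1) * (X ^ (β + 1) * (a ^ (β + 1)) ^ (k + 1))) := by
        simp [mul_pow, pow_add, pow_succ, mul_comm, mul_assoc, mul_left_comm]
      rw [e2]; exact h2
  -- Claim D : (X*a*a^(β+1))^n ∈ H for all n ≥ β+1
  have claimD : ∀ n : ℕ, β + 1 ≤ n → (X * a * a ^ (β + 1)) ^ n ∈ H := by
    intro n hn
    obtain ⟨j, rfl⟩ := Nat.exists_eq_add_of_le hn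
    have hm := H.mul_mem (H.pow_mem hX j) (claimC (β + j))
    have e : (X * a * a ^ (β + 1)) ^ (β + 1 + j)
        = (X * a) ^ j * ((X * a) ^ (β + 1) * (a ^ (β + 1)) ^ (β + j + 1)) := by
      simp [mul_pow, pow_add, pow_succ, mul_comm, mul_assoc, mul_left_comm]
    rw [e]; exact hm
  exact seminormal_of_powers H hsn (X * a * a ^ (β + 1)) β claimD

/-- Let `H ⊆ F` be a seminormal C-monoid and suppose there are `α ∈ ℕ` and a
subgroup `V ⊆ F^×` with `H^× ⊆ V`, `(F^× : V) ∣ α`, `V·(H \ H^×) ⊆ H`, and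
`q^{2α}F ∩ H = q^α(q^αF ∩ H)` for all `q ∈ F \ F^×`.  Then for every
`a ∈ F \ F^×` and every positive multiple `n` of `α` such that `[a^n]` is
idempotent in `C*(H,F)`, the element `a^{n+1}` is `H`-equivalent to `a`; in
particular `[a]` lies in a cyclic subgroup of `C*(H,F)`. -/
theorem stmt_11 {Fu P : Type*} [CommGroup Fu] (H : Submonoid (FM Fu P))
    (hux : UnitsCond H) (hfin : CStarFinite H) (hsn : SeminormalSub H)
    (α : ℕ) (hα : 0 < α) (V : Subgroup (FM Fu P)ˣ)
    (hHV : ∀ u : (FM Fu P)ˣ, (u : FM Fu P) ∈ H → u ∈ V)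
    (hidx : V.index ∣ α)
    (hVH : ∀ u ∈ V, ∀ a : FM Fu P, a ∈ H → ¬ IsUnit a → (u : FM Fu P) * a ∈ H)
    (hP2 : ∀ q : FM Fu P, ¬ IsUnit q →
      {a : FM Fu P | ∃ x : FM Fu P, a = q ^ (2 * α) * x} ∩ ↑H =
        (fun a : FM Fu P => q ^ α * a) ''
          ({a : FM Fu P | ∃ x : FM Fu P, a = q ^ α * x} ∩ ↑H)) :
    ∀ a : FM Fu P, ¬ IsUnit a → ∀ n : ℕ, 0 < n → α ∣ n →
      HRel H (a ^ n * a ^ n) (a ^ n) →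
      HRel H (a ^ (n + 1)) a ∧ ∃ m : ℕ, 0 < m ∧ HRel H (a ^ (m + 1)) a := by
  intro a ha n hn hdvd _hidem
  obtain ⟨β, rfl⟩ : ∃ β, α = β + 1 := ⟨α - 1, by omega⟩
  obtain ⟨k, rfl⟩ := hdvd
  -- downward shift by α, from hP2
  have hdn : ∀ y : FM Fu P,
      a ^ (β + 1) * (a ^ (β + 1) * y) ∈ H → a ^ (β + 1) * y ∈ H := by
    intro y hy
    have e2 : a ^ (2 * (β + 1)) * y = a ^ (β + 1) * (a ^ (β + 1) * y) := by
      rw [two_mul, pow_add, mul_assoc]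
    have hmem : a ^ (2 * (β + 1)) * y ∈
        ({b : FM Fu P | ∃ x : FM Fu P, b = a ^ (2 * (β + 1)) * x} ∩ ↑H :
          Set (FM Fu P)) :=
      ⟨⟨y, rfl⟩, by rw [e2]; exact hy⟩
    rw [hP2 a ha] at hmem
    obtain ⟨c, ⟨-, hcH⟩, hc⟩ := hmem
    have hce : c = a ^ (β + 1) * y := mul_left_cancel (hc.trans e2)
    rw [← hce]; exact hcH
  -- upward shift by α, from hP2
  have hup : ∀ y : FM Fu P,
      a ^ (β + 1) * y ∈ H → a ^ (β + 1) * (a ^ (β + 1) * y) ∈ H := by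
    intro y hy
    have hmem : a ^ (β + 1) * (a ^ (β + 1) * y) ∈
        ((fun b : FM Fu P => a ^ (β + 1) * b) ''
          ({b : FM Fu P | ∃ x : FM Fu P, b = a ^ (β + 1) * x} ∩ ↑H)) :=
      ⟨a ^ (β + 1) * y, ⟨⟨y, rfl⟩, hy⟩, rfl⟩
    rw [← hP2 a ha] at hmem
    exact hmem.2
  letI : CancelCommMonoid (FM Fu P) :=
    { (inferInstance : CommMonoid (FM Fu P)) with
      mul_left_cancel := IsLeftCancelMul.mul_left_cancel }
  have hL1 : ∀ X : FM Fu P, X * a * a ^ (β + 1) ∈ H → X * a ∈ H :=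
    lem_fwd H hsn a β hdn
  have hL2 : ∀ X : FM Fu P, X * a ∈ H → X * a * a ^ (β + 1) ∈ H :=
    lem_bwd H hsn a β hup
  -- iterate
  have fwd : ∀ k : ℕ, ∀ x : FM Fu P, x * a * a ^ ((β + 1) * k) ∈ H → x * a ∈ H := by
    intro k
    induction k with
    | zero => intro x hx; simpa using hx
    | succ k ih =>
      intro x hx
      have e : x * a * a ^ ((β + 1) * (k + 1))
          = x * a ^ ((β + 1) * k) * a * a ^ (β + 1) := by
        have : (β + 1) * (k + 1) = (β + 1) * k + (β + 1) := by ring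
        rw [this, pow_add]
        simp [mul_comm, mul_assoc, mul_left_comm]
      rw [e] at hx
      have h1 := hL1 _ hx
      have e2 : x * a ^ ((β + 1) * k) * a = x * a * a ^ ((β + 1) * k) := by
        simp [mul_comm, mul_assoc, mul_left_comm]
      rw [e2] at h1
      exact ih x h1
  have bwd : ∀ k : ℕ, ∀ x : FM Fu P, x * a ∈ H → x * a * a ^ ((β + 1) * k) ∈ H := by
    intro k
    induction k with
    | zero => intro x hx; simpa using hx
    | succ k ih =>
      intro x hx
      have h1 := ih x hx
      have e2 : x * a * a ^ ((β + 1) * k) = x * a ^ ((β + 1) * k) * a := by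
        simp [mul_comm, mul_assoc, mul_left_comm]
      rw [e2] at h1
      have h2 := hL2 _ h1
      have e : x * a * a ^ ((β + 1) * (k + 1))
          = x * a ^ ((β + 1) * k) * a * a ^ (β + 1) := by
        have : (β + 1) * (k + 1) = (β + 1) * k + (β + 1) := by ring
        rw [this, pow_add]
        simp [mul_comm, mul_assoc, mul_left_comm]
      rw [e]; exact h2
  have key : HRel H (a ^ ((β + 1) * k + 1)) a := by
    intro x
    have e : x * a ^ ((β + 1) * k + 1) = x * a * a ^ ((β + 1) * k) := by
      rw [pow_succ]
      simp [mul_comm, mul_assoc, mul_left_comm]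
    rw [e]
    exact ⟨fwd k x, bwd k x⟩
  exact ⟨key, (β + 1) * k, hn, key⟩
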